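/- Let F = (ZMod 2)[X]/(X² + X + 1) be the field with four elements and t the image of X, so that 1 − t = 1 + t and t·(1 + t) = 1. Equip F with the Alexander quandle operation x ▷ y = t·x + (1−t)·y. Then the function f : F × F → F defined by f(x,y) = (x − y)²·y is a quandle 2-cocycle: f(x,y) − f(x,z) + f(x ▷ y, z) − f(x ▷ z, y ▷ z) = 0 for all x, y, z ∈ F, and f(x,x) = 0 for all x ∈ F. -/
import Mathlib


open Polynomial

/-- Let `F = (ZMod 2)[X]/(X² + X + 1)` be the field with four elements and `t` the image of
`X`, so that `1 - t = 1 + t` and `t * (1 + t) = 1`. With the Alexander operation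
`x ▷ y = t * x + (1 - t) * y`, the function `f(x, y) = (x - y)² * y` is a quandle
2-cocycle. -/
theorem two_cocycle_on_F4 :
    let F := AdjoinRoot (X ^ 2 + X + 1 : Polynomial (ZMod 2))
    let t : F := AdjoinRoot.root (X ^ 2 + X + 1 : Polynomial (ZMod 2))
    let op : F → F → F := fun x y => t * x + (1 - t) * y
    let f : F → F → F := fun x y => (x - y) ^ 2 * y
    (1 - t = 1 + t) ∧ (t * (1 + t) = 1) ∧
    (∀ x y z : F, f x y - f x z + f (op x y) z - f (op x z) (op y z) = 0) ∧
    (∀ x : F, f x x = 0) := by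
  intro F t op f
  have h2 : (2 : F) = 0 := by
    have h : (2 : F) = algebraMap (ZMod 2) F 2 := (map_ofNat _ 2).symm
    rw [h, show (2 : ZMod 2) = 0 from rfl, map_zero]
  have ht : t ^ 2 + t + 1 = 0 := by
    have := AdjoinRoot.eval₂_root (X ^ 2 + X + 1 : Polynomial (ZMod 2))
    simpa [eval₂_add, eval₂_pow] using this
  refine ⟨by linear_combination (-t) * h2, by linear_combination ht - h2, ?_, ?_⟩
  · intro x y z
    show (x - y) ^ 2 * y - (x - z) ^ 2 * z +
        ((t * x + (1 - t) * y) - z) ^ 2 * z -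
        ((t * x + (1 - t) * z) - (t * y + (1 - t) * z)) ^ 2 * (t * y + (1 - t) * z) = 0
    linear_combination (x^2*y - x^2*z - 2*x*y^2 + 2*x*y*z + y^3 - y^2*z - x^2*y*t + x^2*z*t
        + 2*x*y^2*t - 2*x*y*z*t - y^3*t + y^2*z*t) * ht +
      (x*z^2 + y^2*z - y*z^2 - x*y*z + x*y*z*t - x*z^2*t - y^2*z*t + y*z^2*t) * h2
  · intro x; show (x - x) ^ 2 * x = 0; ring
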